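/- For all nonnegative integers n and d, det(M_d') ≠ 0. -/

import Mathlib

open Finset Polynomial Matrix

namespace Capelli

/-- The set `ℙ_{k,n}` of pairs `μ = (μ₁, μ₂)` of nonnegative integers with `μ₁ ≥ μ₂`,
`μ₁ + μ₂ = k` and `μ₂ ≤ n`. -/
def Pkn (n k : ℕ) : Finset (ℕ × ℕ) :=
  (Finset.range (k + 1) ×ˢ Finset.range (k + 1)).filter
    (fun μ => μ.2 ≤ μ.1 ∧ μ.1 + μ.2 = k ∧ μ.2 ≤ n)

/-- The set `ℙ*_{k,n}` of pairs `ν = (ν₁, ν₂)` of nonnegative integers with `ν₁ ≥ ν₂`,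
`ν₁ + ν₂ = k` and `ν₂ ≥ ⌊k/2⌋ - n` (written here additively to avoid truncated subtraction). -/
def PknStar (n k : ℕ) : Finset (ℕ × ℕ) :=
  (Finset.range (k + 1) ×ˢ Finset.range (k + 1)).filter
    (fun ν => ν.2 ≤ ν.1 ∧ ν.1 + ν.2 = k ∧ k / 2 ≤ ν.2 + n)

/-- `Λ_{d,n} = ⋃_{k=0}^d ℙ_{k,n}`. -/
def Lam (n d : ℕ) : Finset (ℕ × ℕ) := (Finset.range (d + 1)).biUnion (Pkn n)

/-- `Λ*_{d,n} = ⋃_{k=0}^d ℙ*_{k,n}`. -/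
def LamStar (n d : ℕ) : Finset (ℕ × ℕ) := (Finset.range (d + 1)).biUnion (PknStar n)

/-- `ℓ_ν = min(ν₁ - ν₂, 2n + 1 - (ν₁ - ν₂))`. -/
def ell (n : ℕ) (ν : ℕ × ℕ) : ℕ := min (ν.1 - ν.2) (2 * n + 1 - (ν.1 - ν.2))

/-- `Λ_{d,n,j} = {μ ∈ Λ_{d,n} : μ₂ ≥ j}`. -/
def Lamj (n d j : ℕ) : Finset (ℕ × ℕ) := (Lam n d).filter (fun μ => j ≤ μ.2)

/-- `Λ*_{d,n,j} = {ν ∈ Λ*_{d,n} : ν₂ ≤ ⌊|ν|/2⌋ - j}`. -/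
def LamStarj (n d j : ℕ) : Finset (ℕ × ℕ) :=
  (LamStar n d).filter (fun ν => ν.2 + j ≤ (ν.1 + ν.2) / 2)

/-- `ν_{(j)} = (|ν| - ⌊|ν|/2⌋ + j, ⌊|ν|/2⌋ - j)`. -/
def nuSub (ν : ℕ × ℕ) (j : ℕ) : ℕ × ℕ :=
  (ν.1 + ν.2 - (ν.1 + ν.2) / 2 + j, (ν.1 + ν.2) / 2 - j)

/-- The polynomial `λ_{μ,ν}(x) = ((2x+1)ℓ_ν - ℓ_ν²)^{μ₂} (ν₁+ν₂)^{μ₁-μ₂} ∈ ℤ[x]`. -/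
noncomputable def lamPoly (n : ℕ) (μ ν : ℕ × ℕ) : Polynomial ℤ :=
  ((2 * X + 1) * C (ell n ν : ℤ) - C ((ell n ν : ℤ) ^ 2)) ^ μ.2 *
    C ((ν.1 + ν.2 : ℕ) : ℤ) ^ (μ.1 - μ.2)

/-- The row ordering: `μ ⪯ μ'` iff `μ₂ < μ₂'`, or `μ₂ = μ₂'` and `μ₁ ≤ μ₁'`. -/
def rowRel (μ μ' : ℕ × ℕ) : Prop := μ.2 < μ'.2 ∨ (μ.2 = μ'.2 ∧ μ.1 ≤ μ'.1)

/-- The column ordering: `ν ⩽ ν'` iff `⌊(ν₁-ν₂)/2⌋ < ⌊(ν₁'-ν₂')/2⌋`, or these are equal and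
`|ν| ≤ |ν'|`.  (A further tie-break by the first coordinate is added so that the relation is
antisymmetric on all of `ℕ × ℕ`; on `Λ*_{d,n}` a tie in the first two comparisons forces
equality, so this agrees with the ordering of the paper there.) -/
def colRel (ν ν' : ℕ × ℕ) : Prop :=
  (ν.1 - ν.2) / 2 < (ν'.1 - ν'.2) / 2 ∨
    ((ν.1 - ν.2) / 2 = (ν'.1 - ν'.2) / 2 ∧
      (ν.1 + ν.2 < ν'.1 + ν'.2 ∨ (ν.1 + ν.2 = ν'.1 + ν'.2 ∧ ν.1 ≤ ν'.1)))

instance : DecidableRel rowRel := fun a b =>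
  inferInstanceAs (Decidable (a.2 < b.2 ∨ (a.2 = b.2 ∧ a.1 ≤ b.1)))

instance : IsTrans (ℕ × ℕ) rowRel := ⟨by intro a b c; unfold rowRel; omega⟩

instance : IsTotal (ℕ × ℕ) rowRel := ⟨by intro a b; unfold rowRel; omega⟩

instance : IsAntisymm (ℕ × ℕ) rowRel :=
  ⟨by intro a b h1 h2; unfold rowRel at h1 h2; rw [Prod.ext_iff]; omega⟩

instance : DecidableRel colRel := fun a b =>
  inferInstanceAs (Decidable ((a.1 - a.2) / 2 < (b.1 - b.2) / 2 ∨
    ((a.1 - a.2) / 2 = (b.1 - b.2) / 2 ∧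
      (a.1 + a.2 < b.1 + b.2 ∨ (a.1 + a.2 = b.1 + b.2 ∧ a.1 ≤ b.1)))))

instance : IsTrans (ℕ × ℕ) colRel := ⟨by intro a b c; unfold colRel; omega⟩

instance : IsTotal (ℕ × ℕ) colRel := ⟨by intro a b; unfold colRel; omega⟩

instance : IsAntisymm (ℕ × ℕ) colRel :=
  ⟨by intro a b h1 h2; unfold colRel at h1 h2; rw [Prod.ext_iff]; omega⟩

/-- The elements of `Λ_{d,n}` listed in increasing order for `⪯`. -/
def rowList (n d : ℕ) : List (ℕ × ℕ) := (Lam n d).sort rowRel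

/-- The elements of `Λ*_{d,n}` listed in increasing order for `⩽`. -/
def colList (n d : ℕ) : List (ℕ × ℕ) := (LamStar n d).sort colRel

/-- The elements of `Λ_{d,n,j}` listed in increasing order for `⪯`. -/
def rowListJ (n d j : ℕ) : List (ℕ × ℕ) := (Lamj n d j).sort rowRel

/-- The elements of `Λ*_{d,n,j}` listed in increasing order for `⩽`. -/
def colListJ (n d j : ℕ) : List (ℕ × ℕ) := (LamStarj n d j).sort colRel

/-- The matrix `M_d = [λ_{μ,ν}]` with rows indexed by `Λ_{d,n}` (ordered by `⪯`) and columns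
indexed by `Λ*_{d,n}` (ordered by `⩽`); since `|Λ_{d,n}| = |Λ*_{d,n}|` the column list has
length `(Lam n d).card` and the `getD` access below always hits an actual entry. -/
noncomputable def Md (n d : ℕ) : Matrix (Fin (Lam n d).card) (Fin (Lam n d).card) (Polynomial ℤ) :=
  fun i j => lamPoly n ((rowList n d).getD i.val (0, 0)) ((colList n d).getD j.val (0, 0))

/-- The matrix `M_d' = [(2ℓ_ν)^{μ₂}(ν₁+ν₂)^{μ₁-μ₂}]` of leading coefficients. -/
def Md' (n d : ℕ) : Matrix (Fin (Lam n d).card) (Fin (Lam n d).card) ℤ :=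
  fun i j =>
    let μ := (rowList n d).getD i.val (0, 0)
    let ν := (colList n d).getD j.val (0, 0)
    (2 * (ell n ν : ℤ)) ^ μ.2 * ((ν.1 + ν.2 : ℕ) : ℤ) ^ (μ.1 - μ.2)

/-- `S_{μ,ν,j}` with `m = μ₂ - j`: the complete homogeneous symmetric polynomial of degree `m`
evaluated at `ℓ_{ν_{(0)}}, …, ℓ_{ν_{(j-1)}}, ℓ_ν`, i.e. the sum over all `(j+1)`-tuples
`(a₀, …, a_j)` of nonnegative integers with `a₀ + ⋯ + a_j = m` of
`ℓ_{ν_{(0)}}^{a₀} ⋯ ℓ_{ν_{(j-1)}}^{a_{j-1}} ℓ_ν^{a_j}`. -/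
def Shs (n : ℕ) (ν : ℕ × ℕ) (j m : ℕ) : ℕ :=
  ∑ a ∈ Finset.Nat.antidiagonalTuple (j + 1) m,
    ∏ i : Fin (j + 1), (if (i : ℕ) < j then ell n (nuSub ν (i : ℕ)) else ell n ν) ^ a i

/-- The matrix `N_j = [2^{μ₂-j}(ν₁+ν₂)^{μ₁-μ₂} S_{μ,ν,j}]` with rows indexed by `Λ_{d,n,j}`
(ordered by `⪯`) and columns indexed by `Λ*_{d,n,j}` (ordered by `⩽`). -/
def Ndj (n d j : ℕ) : Matrix (Fin (Lamj n d j).card) (Fin (Lamj n d j).card) ℤ :=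
  fun i i' =>
    let μ := (rowListJ n d j).getD i.val (0, 0)
    let ν := (colListJ n d j).getD i'.val (0, 0)
    2 ^ (μ.2 - j) * ((ν.1 + ν.2 : ℕ) : ℤ) ^ (μ.1 - μ.2) * (Shs n ν j (μ.2 - j) : ℤ)

/-- The Vandermonde matrix `V(a, a+1, …, a+s-1) = [(a+j)^{i-1}]_{1 ≤ i,j ≤ s}` (0-indexed
as `[(a+j)^i]_{0 ≤ i,j ≤ s-1}`), with the convention `0⁰ = 1`. -/
def vandInt (a s : ℕ) : Matrix (Fin s) (Fin s) ℤ :=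
  fun i j => ((a + (j : ℕ) : ℕ) : ℤ) ^ (i : ℕ)

/-- `f(d,s) = #{(ν,ν') ∈ Λ*_{d,n} × Λ*_{d,n} : |ν| = |ν'|, ℓ_{ν'} < ℓ_ν, ℓ_ν + ℓ_{ν'} - 1 = s}`. -/
def fds (n d : ℕ) (s : ℤ) : ℕ :=
  (((LamStar n d) ×ˢ (LamStar n d)).filter
    (fun p => p.1.1 + p.1.2 = p.2.1 + p.2.2 ∧ ell n p.2 < ell n p.1 ∧
      (ell n p.1 : ℤ) + (ell n p.2 : ℤ) - 1 = s)).card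

/-- `g_k(s) = #{(ν,ν') ∈ ℙ*_{k,n} × ℙ*_{k,n} : ℓ_{ν'} < ℓ_ν, ℓ_ν + ℓ_{ν'} - 1 = s}`. -/
def gks (n k : ℕ) (s : ℤ) : ℕ :=
  ((PknStar n k ×ˢ PknStar n k).filter
    (fun p => ell n p.2 < ell n p.1 ∧ (ell n p.1 : ℤ) + (ell n p.2 : ℤ) - 1 = s)).card

/-- For all nonnegative integers `n` and `d`, `det(M_d') ≠ 0`. -/
lemma mem_Pkn {n k : ℕ} {μ : ℕ × ℕ} :
    μ ∈ Pkn n k ↔ μ.2 ≤ μ.1 ∧ μ.1 + μ.2 = k ∧ μ.2 ≤ n := by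
  simp only [Pkn, mem_filter, mem_product, mem_range]
  omega

lemma mem_PknStar {n k : ℕ} {ν : ℕ × ℕ} :
    ν ∈ PknStar n k ↔ ν.2 ≤ ν.1 ∧ ν.1 + ν.2 = k ∧ k / 2 ≤ ν.2 + n := by
  simp only [PknStar, mem_filter, mem_product, mem_range]
  omega

lemma mem_Lam {n d : ℕ} {μ : ℕ × ℕ} :
    μ ∈ Lam n d ↔ μ.2 ≤ μ.1 ∧ μ.1 + μ.2 ≤ d ∧ μ.2 ≤ n := by
  simp only [Lam, mem_biUnion, mem_range, mem_Pkn]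
  constructor
  · rintro ⟨k, hk, h⟩; omega
  · intro h; exact ⟨μ.1 + μ.2, by omega, by omega⟩

lemma mem_LamStar {n d : ℕ} {ν : ℕ × ℕ} :
    ν ∈ LamStar n d ↔ ν.2 ≤ ν.1 ∧ ν.1 + ν.2 ≤ d ∧ (ν.1 + ν.2) / 2 ≤ ν.2 + n := by
  simp only [LamStar, mem_biUnion, mem_range, mem_PknStar]
  constructor
  · rintro ⟨k, hk, h⟩; omega
  · intro h; exact ⟨ν.1 + ν.2, by omega, by omega⟩

lemma card_Pkn (n k : ℕ) : (Pkn n k).card = min (k / 2) n + 1 := by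
  have : Pkn n k = (Finset.range (min (k / 2) n + 1)).image (fun t => (k - t, t)) := by
    ext ⟨a, b⟩
    simp only [mem_Pkn, Finset.mem_image, mem_range]
    constructor
    · intro h; exact ⟨b, by omega, by simp; omega⟩
    · rintro ⟨t, ht, h⟩
      obtain ⟨rfl, rfl⟩ : k - t = a ∧ t = b := by
        simpa [Prod.ext_iff] using h
      omega
  rw [this, Finset.card_image_of_injOn, Finset.card_range]
  intro x _ y _ h
  simpa using (Prod.ext_iff.mp h).2

lemma card_PknStar (n k : ℕ) : (PknStar n k).card = min (k / 2) n + 1 := by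
  have : PknStar n k = (Finset.range (min (k / 2) n + 1)).image
      (fun t => (k - (k / 2 - t), k / 2 - t)) := by
    ext ν
    simp only [mem_PknStar, Finset.mem_image, mem_range]
    constructor
    · intro h
      refine ⟨k / 2 - ν.2, by omega, ?_⟩
      rw [Prod.ext_iff]
      refine ⟨?_, ?_⟩ <;> dsimp only <;> omega
    · rintro ⟨t, ht, rfl⟩
      refine ⟨by omega, by omega, by omega⟩
  rw [this, Finset.card_image_of_injOn, Finset.card_range]
  intro x hx y hy h
  simp only [Finset.coe_range, Set.mem_Iio] at hx hy
  have := (Prod.ext_iff.mp h).2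
  simp only at this
  omega

lemma ell_injOn (n k : ℕ) : ∀ ν ∈ PknStar n k, ∀ ν' ∈ PknStar n k,
    ell n ν = ell n ν' → ν = ν' := by
  intro ν hν ν' hν' h
  rw [mem_PknStar] at hν hν'
  unfold ell at h
  rw [Prod.ext_iff]
  omega


lemma keyA (n : ℕ) : ∀ d : ℕ, ∀ p : Polynomial (Polynomial ℤ),
    (∀ j a : ℕ, (p.coeff j).coeff a ≠ 0 → j ≤ n ∧ 2 * j + a ≤ d) →
    (∀ ν ∈ LamStar n d, Polynomial.eval (2 * (ell n ν : ℤ))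
      (p.map (Polynomial.evalRingHom ((ν.1 + ν.2 : ℕ) : ℤ))) = 0) →
    p = 0 := by
  intro d
  induction d with
  | zero =>
    intro p h1 h2
    have h00 : ((0, 0) : ℕ × ℕ) ∈ LamStar n 0 := by rw [mem_LamStar]; omega
    have hc : ((p.coeff 0).coeff 0 : ℤ) = 0 := by
      have := h2 (0, 0) h00
      have hell : ell n (0, 0) = 0 := by unfold ell; omega
      rw [hell] at this
      simpa [Polynomial.coeff_zero_eq_eval_zero, Polynomial.coeff_map] using this
    apply Polynomial.ext; intro j
    apply Polynomial.ext; intro a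
    rw [Polynomial.coeff_zero, Polynomial.coeff_zero]
    by_contra ha
    have := h1 j a ha
    have hj : j = 0 := by omega
    have haa : a = 0 := by omega
    rw [hj, haa] at ha
    exact ha hc
  | succ d ih =>
    intro p h1 h2
    set D := d + 1 with hD
    set J := min n (D / 2) with hJ
    -- p has natDegree ≤ J (in Y)
    have hpdeg : p.natDegree ≤ J := by
      rw [Polynomial.natDegree_le_iff_coeff_eq_zero]
      intro j hj
      apply Polynomial.ext; intro a
      rw [Polynomial.coeff_zero]
      by_contra ha
      have := h1 j a ha
      omega
    -- the set of y-points on the line x = D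
    set s : Finset ℤ := (PknStar n D).image (fun ν => 2 * (ell n ν : ℤ)) with hs
    have hscard : s.card = J + 1 := by
      rw [hs, Finset.card_image_of_injOn, card_PknStar]
      · omega
      · intro x hx y hy hxy
        simp only [Finset.mem_coe] at hx hy
        have hxy' : (2 : ℤ) * ell n x = 2 * ell n y := hxy
        apply ell_injOn n D x hx y hy
        omega
    have hq : p.map (Polynomial.evalRingHom ((D : ℕ) : ℤ)) = 0 := by
      apply Polynomial.eq_zero_of_natDegree_lt_card_of_eval_eq_zero' _ s
      · intro x hx
        rw [hs] at hx
        obtain ⟨ν, hν, rfl⟩ := Finset.mem_image.mp hx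
        have hsum : ν.1 + ν.2 = D := (mem_PknStar.mp hν).2.1
        have : ν ∈ LamStar n D := by
          rw [mem_LamStar]
          have := mem_PknStar.mp hν
          omega
        have := h2 ν this
        rwa [hsum] at this
      · calc (p.map (Polynomial.evalRingHom ((D : ℕ) : ℤ))).natDegree
            ≤ p.natDegree := Polynomial.natDegree_map_le
          _ < J + 1 := by omega
          _ = s.card := hscard.symm
    have hroot : ∀ j, (p.coeff j).eval ((D : ℕ) : ℤ) = 0 := by
      intro j
      have := congrArg (fun q => Polynomial.coeff q j) hq
      simpa [Polynomial.coeff_map] using this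
    -- divide each coefficient by (X - D)
    set g : Polynomial ℤ := Polynomial.X - Polynomial.C ((D : ℕ) : ℤ) with hg
    have hgm : g.Monic := Polynomial.monic_X_sub_C _
    set p' : Polynomial (Polynomial ℤ) :=
      ∑ j ∈ Finset.range (p.natDegree + 1), Polynomial.monomial j ((p.coeff j) /ₘ g) with hp'
    have hc' : ∀ j, p'.coeff j = (p.coeff j) /ₘ g := by
      intro j
      rw [hp', Polynomial.finset_sum_coeff]
      by_cases hj : j ≤ p.natDegree
      · rw [Finset.sum_eq_single j]
        · simp [Polynomial.coeff_monomial]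
        · intro b _ hb; simp [Polynomial.coeff_monomial, hb]
        · intro hj'; exact absurd (Finset.mem_range.mpr (by omega)) hj'
      · rw [Finset.sum_eq_zero, Polynomial.coeff_eq_zero_of_natDegree_lt (by omega),
          Polynomial.zero_divByMonic]
        intro b hb
        rw [Finset.mem_range] at hb
        rw [Polynomial.coeff_monomial, if_neg (by omega)]
    have hsplit : ∀ j, p.coeff j = g * ((p.coeff j) /ₘ g) := by
      intro j
      conv_lhs => rw [← Polynomial.modByMonic_add_div (p.coeff j) g]
      rw [Polynomial.modByMonic_X_sub_C_eq_C_eval, hroot, map_zero, zero_add]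
    have hfact : p = Polynomial.C g * p' := by
      apply Polynomial.ext; intro j
      rw [Polynomial.coeff_C_mul, hc', ← hsplit]
    have h1' : ∀ j a : ℕ, (p'.coeff j).coeff a ≠ 0 → j ≤ n ∧ 2 * j + a ≤ d := by
      intro j a ha
      rw [hc'] at ha
      have hpj : p.coeff j ≠ 0 := by
        intro h0
        rw [h0, Polynomial.zero_divByMonic] at ha
        exact ha rfl
      set m := (p.coeff j).natDegree with hm
      have hlead : (p.coeff j).coeff m ≠ 0 := by
        rw [hm]; exact Polynomial.leadingCoeff_ne_zero.mpr hpj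
      have hjm := h1 j m hlead
      have hdm : ((p.coeff j) /ₘ g).natDegree = m - 1 := by
        rw [Polynomial.natDegree_divByMonic _ hgm, hg, Polynomial.natDegree_X_sub_C]
      have hm1 : 1 ≤ m := by
        by_contra hm0
        have h0 : (p.coeff j).natDegree = 0 := by omega
        have hC := Polynomial.eq_C_of_natDegree_eq_zero h0
        have he := hroot j
        rw [hC, Polynomial.eval_C] at he
        rw [hC, he, map_zero] at hpj
        exact hpj rfl
      have ham : a ≤ m - 1 := by
        by_contra ham
        exact ha (Polynomial.coeff_eq_zero_of_natDegree_lt (by omega))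
      omega
    have h2' : ∀ ν ∈ LamStar n d, Polynomial.eval (2 * (ell n ν : ℤ))
        (p'.map (Polynomial.evalRingHom ((ν.1 + ν.2 : ℕ) : ℤ))) = 0 := by
      intro ν hν
      have hνD : ν ∈ LamStar n D := by
        rw [mem_LamStar] at hν ⊢
        omega
      have := h2 ν hνD
      rw [hfact, Polynomial.map_mul, Polynomial.map_C, Polynomial.eval_mul,
        Polynomial.eval_C] at this
      have hk : ν.1 + ν.2 ≤ d := (mem_LamStar.mp hν).2.1
      have hne : (Polynomial.evalRingHom ((ν.1 + ν.2 : ℕ) : ℤ)) g ≠ 0 := by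
        have hval : (Polynomial.evalRingHom ((ν.1 + ν.2 : ℕ) : ℤ)) g
            = ((ν.1 + ν.2 : ℕ) : ℤ) - ((D : ℕ) : ℤ) := by
          simp [hg, Polynomial.coe_evalRingHom]
        rw [hval]
        intro hcon
        omega
      rcases mul_eq_zero.mp this with h | h
      · exact absurd h hne
      · exact h
    have := ih p' h1' h2'
    rw [hfact, this, mul_zero]

lemma card_LamStar_eq (n d : ℕ) : (LamStar n d).card = (Lam n d).card := by
  have hdisj : ∀ (P : ℕ → Finset (ℕ × ℕ)),
      (∀ k ν, ν ∈ P k → ν.1 + ν.2 = k) →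
      (∀ x ∈ Finset.range (d + 1), ∀ y ∈ Finset.range (d + 1), x ≠ y → Disjoint (P x) (P y)) := by
    intro P hP x _ y _ hxy
    rw [Finset.disjoint_left]
    intro a hax hay
    exact hxy ((hP x a hax).symm.trans (hP y a hay))
  rw [LamStar, Lam, Finset.card_biUnion (hdisj _ (fun k ν h => (mem_PknStar.mp h).2.1)),
    Finset.card_biUnion (hdisj _ (fun k ν h => (mem_Pkn.mp h).2.1))]
  exact Finset.sum_congr rfl (fun k _ => by rw [card_PknStar, card_Pkn])

theorem det_Md'_ne_zero (n d : ℕ) : (Md' n d).det ≠ 0 := by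
  intro hdet
  set N := (Lam n d).card with hN
  obtain ⟨v, hv0, hv⟩ := Matrix.exists_vecMul_eq_zero_iff.mpr hdet
  have hlenr : (rowList n d).length = N := Finset.length_sort _
  have hlenc : (colList n d).length = N := by
    rw [colList, Finset.length_sort, card_LamStar_eq]
  set μ : Fin N → ℕ × ℕ := fun i => (rowList n d).getD i.val (0, 0) with hμ
  have hμget : ∀ i : Fin N, μ i = (rowList n d)[i.val]'(by omega) := by
    intro i
    exact List.getD_eq_getElem _ _ (by omega)
  have μmem : ∀ i : Fin N, μ i ∈ Lam n d := by
    intro i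
    rw [hμget]
    have := List.getElem_mem (l := rowList n d) (n := i.val) (by omega)
    unfold rowList at this
    rwa [Finset.mem_sort] at this
  have μinj : Function.Injective μ := by
    intro i j hij
    rw [hμget, hμget] at hij
    have hnd : (rowList n d).Nodup := by
      unfold rowList; exact Finset.sort_nodup _ _
    exact Fin.ext ((hnd.getElem_inj_iff).mp hij)
  have colsurj : ∀ ν ∈ LamStar n d, ∃ j : Fin N, (colList n d).getD j.val (0, 0) = ν := by
    intro ν hν
    have : ν ∈ colList n d := by
      unfold colList; rwa [Finset.mem_sort]
    obtain ⟨m, hm, hme⟩ := List.mem_iff_getElem.mp this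
    refine ⟨⟨m, by omega⟩, ?_⟩
    rw [List.getD_eq_getElem _ _ (by omega)]
    exact hme
  -- the bivariate polynomial encoding the row combination v
  set p : Polynomial (Polynomial ℤ) :=
    ∑ i : Fin N, Polynomial.monomial (μ i).2 (Polynomial.monomial ((μ i).1 - (μ i).2) (v i))
    with hp
  have hcoeff : ∀ j a : ℕ, (p.coeff j).coeff a
      = ∑ i : Fin N, if (μ i).2 = j ∧ (μ i).1 - (μ i).2 = a then v i else 0 := by
    intro j a
    rw [hp, Polynomial.finset_sum_coeff, Polynomial.finset_sum_coeff]
    apply Finset.sum_congr rfl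
    intro i _
    rw [Polynomial.coeff_monomial]
    by_cases h1 : (μ i).2 = j
    · rw [if_pos h1, Polynomial.coeff_monomial]
      by_cases h2 : (μ i).1 - (μ i).2 = a
      · rw [if_pos h2, if_pos ⟨h1, h2⟩]
      · rw [if_neg h2, if_neg (by tauto)]
    · rw [if_neg h1, Polynomial.coeff_zero, if_neg (by tauto)]
  have h1 : ∀ j a : ℕ, (p.coeff j).coeff a ≠ 0 → j ≤ n ∧ 2 * j + a ≤ d := by
    intro j a ha
    by_contra hcon
    apply ha
    rw [hcoeff]
    apply Finset.sum_eq_zero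
    intro i _
    rw [if_neg]
    rintro ⟨hb, hc⟩
    have hmem := mem_Lam.mp (μmem i)
    omega
  have hEp : ∀ x y : ℤ, Polynomial.eval y (p.map (Polynomial.evalRingHom x))
      = ∑ i : Fin N, v i * x ^ ((μ i).1 - (μ i).2) * y ^ (μ i).2 := by
    intro x y
    rw [hp, Polynomial.map_sum, Polynomial.eval_finset_sum]
    apply Finset.sum_congr rfl
    intro i _
    rw [Polynomial.map_monomial, Polynomial.eval_monomial]
    simp only [Polynomial.coe_evalRingHom, Polynomial.eval_monomial]
  have h2 : ∀ ν ∈ LamStar n d, Polynomial.eval (2 * (ell n ν : ℤ))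
      (p.map (Polynomial.evalRingHom ((ν.1 + ν.2 : ℕ) : ℤ))) = 0 := by
    intro ν hν
    obtain ⟨j, hj⟩ := colsurj ν hν
    have hvj := congrFun hv j
    rw [hEp]
    simp only [Matrix.vecMul, dotProduct, Md'] at hvj
    rw [show (0 : Fin N → ℤ) j = 0 from rfl] at hvj
    rw [← hvj]
    apply Finset.sum_congr rfl
    intro i _
    rw [hj]
    ring
  have hp0 : p = 0 := keyA n d p h1 h2
  apply hv0
  funext i
  have := hcoeff ((μ i).2) ((μ i).1 - (μ i).2)
  rw [hp0] at this
  simp only [Polynomial.coeff_zero] at this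
  rw [Finset.sum_eq_single i] at this
  · rw [if_pos ⟨rfl, rfl⟩] at this
    simpa using this.symm
  · intro b _ hb
    rw [if_neg]
    rintro ⟨hb2, hb1⟩
    apply hb
    apply μinj
    have hmb := mem_Lam.mp (μmem b)
    have hmi := mem_Lam.mp (μmem i)
    have : (μ b).1 = (μ i).1 := by omega
    exact Prod.ext this hb2
  · intro hi
    exact absurd (Finset.mem_univ i) hi


end Capelli
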